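/- Any deterministic or randomized algorithm for RAO is Ω(min{C, n})-competitive, where C is the accuracy of the hints. Concretely: for the instance with T = 2, t_i = 2 and h_i = C for all i, where article k has rates c_k = (1, C) and all other articles have rates (1, 1), the hints are C-accurate, the optimal offline value is C + 1, and the expected value of any online algorithm in the random order model is at most (1/n)(C+1) + 2(1 − 1/n) ≤ (2/n + 2/C)·(C+1). -/

import Mathlib

/-- Reading one article online (see the RAO model): decisions based on the history of
previously observed articles and the observations from the current article. -/
def readSteps (A : List (List ℕ) → List ℕ → Bool) (hist : List (List ℕ)) (c : ℕ → ℕ) :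
    ℕ → List ℕ → List ℕ
  | 0, obs => obs
  | fuel + 1, obs =>
      if A hist obs then readSteps A hist c fuel (obs ++ [c (obs.length + 1)]) else obs

/-- Run the online algorithm `A` on a stream of articles (length, rate function) with
the given remaining time budget; returns the total information gained. -/
def runAlg (A : List (List ℕ) → List ℕ → Bool) :
    List (List ℕ) → ℕ → List (ℕ × (ℕ → ℕ)) → ℕ
  | _, _, [] => 0
  | hist, budget, (len, c) :: rest =>
      let obs := readSteps A hist c (min len budget) []
      obs.sum + runAlg A (hist ++ [obs]) (budget - obs.length) rest

variable (A : List (List ℕ) → List ℕ → Bool)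

lemma runAlg_cons (hist budget len c rest) :
    runAlg A hist budget ((len, c) :: rest) =
      (readSteps A hist c (min len budget) []).sum +
        runAlg A (hist ++ [readSteps A hist c (min len budget) []])
          (budget - (readSteps A hist c (min len budget) []).length) rest := rfl

lemma runAlg_zero : ∀ (L : List (ℕ × (ℕ → ℕ))) hist, runAlg A hist 0 L = 0
  | [], _ => rfl
  | (len, c) :: L, hist => by
      rw [runAlg_cons]
      simp only [Nat.min_zero]
      show 0 + runAlg A _ (0 - 0) L = 0
      rw [Nat.zero_add]
      exact runAlg_zero L _

lemma readSteps_one (hist c) :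
    readSteps A hist c 1 [] = if A hist [] then [c 1] else [] := by
  by_cases h : A hist [] <;> simp [readSteps, h]

lemma readSteps_two (hist) (c : ℕ → ℕ) (hc1 : c 1 = 1) :
    readSteps A hist c 2 [] =
      if A hist [] then (if A hist [1] then [1, c 2] else [1]) else [] := by
  by_cases h : A hist [] <;> by_cases h2 : A hist [1] <;>
    simp [readSteps, h, hc1, h2]

lemma runAlg_le_one : ∀ (L : List (ℕ × (ℕ → ℕ))), (∀ p ∈ L, p.1 = 2 ∧ p.2 1 = 1) →
    ∀ hist, runAlg A hist 1 L ≤ 1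
  | [], _, _ => Nat.zero_le 1
  | (len, c) :: L, hL, hist => by
      obtain ⟨hlen, hc1⟩ := hL _ List.mem_cons_self
      dsimp at hlen hc1; subst hlen
      rw [runAlg_cons]
      have hmin : min 2 1 = 1 := rfl
      rw [hmin, readSteps_one]
      by_cases h : A hist []
      · simp [h, hc1, runAlg_zero A L]
      · simp only [h, if_false]
        simpa using runAlg_le_one L (fun p hp => hL p (List.mem_cons_of_mem _ hp)) _


lemma runAlg_le_CP1 (C : ℕ) (hC : 1 ≤ C) :
    ∀ (L : List (ℕ × (ℕ → ℕ))), (∀ p ∈ L, p.1 = 2 ∧ p.2 1 = 1 ∧ p.2 2 ≤ C) →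
    ∀ hist, runAlg A hist 2 L ≤ C + 1
  | [], _, _ => Nat.zero_le _
  | (len, c) :: L, hL, hist => by
      obtain ⟨hlen, hc1, hc2⟩ := hL _ List.mem_cons_self
      dsimp at hlen hc1 hc2; subst hlen
      have htail : ∀ p ∈ L, p.1 = 2 ∧ p.2 1 = 1 ∧ p.2 2 ≤ C :=
        fun p hp => hL p (List.mem_cons_of_mem _ hp)
      rw [runAlg_cons]
      have hmin : min 2 2 = 2 := rfl
      rw [hmin, readSteps_two A hist c hc1]
      by_cases h : A hist []
      · by_cases h2 : A hist [1]
        · rw [if_pos h, if_pos h2]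
          simp [runAlg_zero A L]
          omega
        · rw [if_pos h, if_neg h2]
          have := runAlg_le_one A L (fun p hp => ⟨(htail p hp).1, (htail p hp).2.1⟩)
            (hist ++ [[1]])
          simp only [List.sum_cons, List.sum_nil, List.length_cons, List.length_nil]
          have h21 : (2 : ℕ) - (0 + 1) = 1 := rfl
          rw [h21]
          omega
      · rw [if_neg h]
        simpa using runAlg_le_CP1 C hC L htail (hist ++ [[]])

def deepIdx (A : List (List ℕ) → List ℕ → Bool) : List (List ℕ) → ℕ → Option ℕ
  | _, 0 => none
  | hist, m + 1 =>
      if A hist [] then (if A hist [1] then some 0 else none)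
      else (deepIdx A (hist ++ [[]]) m).map (· + 1)

lemma deepIdx_succ (hist m) : deepIdx A hist (m + 1) =
    if A hist [] then (if A hist [1] then some 0 else none)
    else (deepIdx A (hist ++ [[]]) m).map (· + 1) := rfl

lemma deepIdx_lt : ∀ (m : ℕ) (hist r), deepIdx A hist m = some r → r < m
  | 0, hist, r => by simp [deepIdx]
  | m + 1, hist, r => by
      rw [deepIdx_succ]
      by_cases h : A hist []
      · rw [if_pos h]
        by_cases h2 : A hist [1]
        · rw [if_pos h2]; intro he
          simp at he; omega
        · rw [if_neg h2]; intro he; simp at he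
      · rw [if_neg h]
        intro he
        rw [Option.map_eq_some_iff] at he
        obtain ⟨a, ha, rfl⟩ := he
        have := deepIdx_lt m (hist ++ [[]]) a ha
        omega

lemma runAlg_le_two :
    ∀ (L : List (ℕ × (ℕ → ℕ))), (∀ p ∈ L, p.1 = 2 ∧ p.2 1 = 1) →
    ∀ hist, (∀ r, deepIdx A hist L.length = some r →
        ∃ h : r < L.length, (L.get ⟨r, h⟩).2 2 = 1) →
    runAlg A hist 2 L ≤ 2
  | [], _, _, _ => Nat.zero_le _
  | (len, c) :: L, hL, hist, hD => by
      obtain ⟨hlen, hc1⟩ := hL _ List.mem_cons_self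
      dsimp at hlen hc1; subst hlen
      have htail : ∀ p ∈ L, p.1 = 2 ∧ p.2 1 = 1 :=
        fun p hp => hL p (List.mem_cons_of_mem _ hp)
      rw [runAlg_cons]
      have hmin : min 2 2 = 2 := rfl
      rw [hmin, readSteps_two A hist c hc1]
      by_cases h : A hist []
      · by_cases h2 : A hist [1]
        · have hd0 : deepIdx A hist (((2, c) :: L).length) = some 0 := by
            simp only [List.length_cons, deepIdx_succ, if_pos h, if_pos h2]
          obtain ⟨_, hc2⟩ := hD 0 hd0
          simp only [List.get] at hc2
          rw [if_pos h, if_pos h2]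
          simp [runAlg_zero A L, hc2]
        · rw [if_pos h, if_neg h2]
          have := runAlg_le_one A L htail (hist ++ [[1]])
          simp only [List.sum_cons, List.sum_nil, List.length_cons, List.length_nil]
          have h21 : (2 : ℕ) - (0 + 1) = 1 := rfl
          rw [h21]
          omega
      · rw [if_neg h]
        simp only [List.sum_nil, List.length_nil, Nat.zero_add, Nat.sub_zero]
        refine Nat.le_trans (Nat.le_of_eq ?_) (runAlg_le_two L htail (hist ++ [[]]) ?_)
        · simp
        · intro r hr
          have hstep : deepIdx A hist (((2, c) :: L).length) = some (r + 1) := by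
            simp only [List.length_cons, deepIdx_succ, if_neg h, hr, Option.map_some]
          obtain ⟨hlt, hget⟩ := hD (r + 1) hstep
          exact ⟨by simpa using hlt, by simpa using hget⟩

lemma card_fiber (n : ℕ) (hn : 1 ≤ n) (a k : Fin n) :
    (Finset.univ.filter fun π : Equiv.Perm (Fin n) => π a = k).card
      = Nat.factorial (n - 1) := by
  have hconst : ∀ x : Fin n,
      (Finset.univ.filter fun π : Equiv.Perm (Fin n) => π a = x).card
        = (Finset.univ.filter fun π : Equiv.Perm (Fin n) => π a = k).card := by
    intro x
    refine Finset.card_bij' (fun π _ => Equiv.swap x k * π)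
      (fun π _ => Equiv.swap x k * π) ?_ ?_ ?_ ?_
    · intro π hπ
      simp only [Finset.mem_filter, Finset.mem_univ, true_and] at hπ ⊢
      simp [hπ]
    · intro π hπ
      simp only [Finset.mem_filter, Finset.mem_univ, true_and] at hπ ⊢
      simp [hπ]
    · intro π _
      show Equiv.swap x k * (Equiv.swap x k * π) = π
      rw [← mul_assoc, Equiv.swap_mul_self, one_mul]
    · intro π _
      show Equiv.swap x k * (Equiv.swap x k * π) = π
      rw [← mul_assoc, Equiv.swap_mul_self, one_mul]
  have hfib : (Finset.univ : Finset (Equiv.Perm (Fin n))).card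
      = ∑ x : Fin n,
        (Finset.univ.filter fun π : Equiv.Perm (Fin n) => π a = x).card :=
    Finset.card_eq_sum_card_fiberwise (fun π _ => Finset.mem_univ (π a))
  rw [Finset.sum_congr rfl (fun x _ => hconst x), Finset.sum_const] at hfib
  simp only [Finset.card_univ, Fintype.card_perm, Fintype.card_fin,
    smul_eq_mul] at hfib
  have := Nat.mul_factorial_pred (by omega : n ≠ 0)
  exact Nat.eq_of_mul_eq_mul_left (Nat.lt_of_lt_of_le Nat.zero_lt_one hn)
    (by rw [← hfib, this])


/-- Any algorithm for RAO is `Ω(min{C, n})`-competitive, where `C` is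
the accuracy of the hints.  Instance: `T = 2`, `t i = 2`, `h i = C` for all `i`;
article `k` has rates `(1, C)`, all others `(1, 1)`.  Then the hints are `C`-accurate
(`h i · t i ≤ C · Σ_j c i j`), the offline optimum is `C + 1`, and every
(deterministic) online algorithm has expected value over the uniformly random order at
most `(1/n)(C+1) + 2(1 - 1/n)`, i.e. summed over all `n!` orders, at most
`(n-1)!·((C+1) + 2(n-1))`. -/
theorem accuracy_lower_bound (n C : ℕ) (hn : 1 ≤ n) (hC : 1 ≤ C)
    (k : Fin n) (art : Fin n → ℕ → ℕ)
    (hart : art = fun i : Fin n =>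
      if i = k then (fun j => if j = 2 then C else 1) else (fun _ => 1)) :
    -- the hints h i = C are C-accurate:  h i * t i ≤ C * Σ_{j=1}^{t i} c i j
    ((∀ i, C * 2 ≤ C * ∑ j ∈ Finset.Icc 1 2, art i j) ∧
    -- the offline optimum is C + 1
    (∃ τ : Fin n → ℕ, (∀ i, τ i ≤ 2) ∧ (∑ i, τ i ≤ 2) ∧
        (∑ i, ∑ j ∈ Finset.Icc 1 (τ i), art i j) = C + 1) ∧
    (∀ τ : Fin n → ℕ, (∀ i, τ i ≤ 2) → (∑ i, τ i ≤ 2) →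
        (∑ i, ∑ j ∈ Finset.Icc 1 (τ i), art i j) ≤ C + 1) ∧
    -- any online algorithm is bad in expectation over the random order
    (∀ A : List (List ℕ) → List ℕ → Bool,
        ∑ π : Equiv.Perm (Fin n),
            runAlg A [] 2 (List.ofFn fun r => (2, art (π r)))
          ≤ Nat.factorial (n - 1) * ((C + 1) + 2 * (n - 1)))) := by
  have hA1 : ∀ i, art i 1 = 1 := by
    intro i; rw [hart]; by_cases hi : i = k <;> simp [hi]
  have hA2k : art k 2 = C := by rw [hart]; simp
  have hA2 : ∀ i, i ≠ k → art i 2 = 1 := by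
    intro i hi; rw [hart]; simp [hi]
  have hA2le : ∀ i, art i 2 ≤ C := by
    intro i; by_cases hi : i = k
    · rw [hi, hA2k]
    · rw [hA2 i hi]; exact hC
  have hIcc12 : (Finset.Icc 1 2 : Finset ℕ) = {1, 2} := rfl
  have hsum12 : ∀ i, ∑ j ∈ Finset.Icc 1 2, art i j = 1 + art i 2 := by
    intro i
    rw [hIcc12, Finset.sum_pair (by norm_num : (1 : ℕ) ≠ 2), hA1]
  have hA2ge : ∀ i, 1 ≤ art i 2 := by
    intro i; by_cases hi : i = k
    · rw [hi, hA2k]; exact hC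
    · rw [hA2 i hi]
  refine ⟨?_, ?_, ?_, ?_⟩
  · -- accuracy
    intro i
    apply Nat.mul_le_mul_left
    rw [hsum12]
    have := hA2ge i
    omega
  · -- optimal lower: witness τ
    refine ⟨fun i => if i = k then 2 else 0, ?_, ?_, ?_⟩
    · intro i; by_cases hi : i = k <;> simp [hi]
    · rw [Finset.sum_ite_eq' Finset.univ k (fun _ => 2)]
      simp
    · have hterm : ∀ i : Fin n,
          (∑ j ∈ Finset.Icc 1 (if i = k then 2 else 0), art i j)
            = if i = k then C + 1 else 0 := by
        intro i
        by_cases hi : i = k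
        · subst hi
          rw [if_pos rfl, if_pos rfl, hsum12, hA2k, Nat.add_comm]
        · rw [if_neg hi, if_neg hi]
          simp
      rw [Finset.sum_congr rfl (fun i _ => hterm i),
        Finset.sum_ite_eq' Finset.univ k (fun _ => C + 1)]
      simp
  · -- optimal upper
    intro τ hτ2 hτsum
    have hinner : ∀ i : Fin n, (∑ j ∈ Finset.Icc 1 (τ i), art i j)
        ≤ τ i + (if i = k then (if 2 ∈ Finset.Icc 1 (τ i) then C - 1 else 0) else 0) := by
      intro i
      by_cases hi : i = k
      · subst hi
        rw [if_pos rfl]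
        have hpt : ∀ j ∈ Finset.Icc 1 (τ i), art i j
            ≤ 1 + (if j = 2 then C - 1 else 0) := by
          intro j _
          by_cases hj : j = 2
          · subst hj; rw [hA2k, if_pos rfl]; omega
          · rw [hart]; simp [hj]
        refine le_trans (Finset.sum_le_sum hpt) ?_
        rw [Finset.sum_add_distrib, Finset.sum_const, Nat.card_Icc,
          Finset.sum_ite_eq' (Finset.Icc 1 (τ i)) 2 (fun _ => C - 1)]
        simp [Nat.smul_one_eq_cast]
      · rw [if_neg hi]
        have hpt : ∀ j ∈ Finset.Icc 1 (τ i), art i j = 1 := by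
          intro j hj
          rw [hart]; simp [hi]
        rw [Finset.sum_congr rfl hpt, Finset.sum_const, Nat.card_Icc]
        simp [Nat.smul_one_eq_cast]
    refine le_trans (Finset.sum_le_sum fun i _ => hinner i) ?_
    rw [Finset.sum_add_distrib,
      Finset.sum_ite_eq' Finset.univ k
        (fun x => if 2 ∈ Finset.Icc 1 (τ x) then C - 1 else 0)]
    have h1 : (if k ∈ Finset.univ then (if 2 ∈ Finset.Icc 1 (τ k) then C - 1 else 0) else 0) ≤ C - 1 := by
      by_cases h2 : 2 ∈ Finset.Icc 1 (τ k) <;> simp [h2]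
    omega
  · -- online
    intro A
    obtain ⟨m, rfl⟩ : ∃ m, n = m + 1 := ⟨n - 1, by omega⟩
    simp only [Nat.add_sub_cancel]
    have hmem : ∀ (π : Equiv.Perm (Fin (m + 1))) p,
        p ∈ (List.ofFn fun r => (2, art (π r))) → p.1 = 2 ∧ p.2 1 = 1 ∧ p.2 2 ≤ C := by
      intro π p hp
      rw [List.mem_ofFn] at hp
      obtain ⟨r, rfl⟩ := hp
      exact ⟨rfl, hA1 _, hA2le _⟩
    rcases hd : deepIdx A [] (m + 1) with _ | r
    · -- no deep read ever
      have hb : ∀ π : Equiv.Perm (Fin (m + 1)),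
          runAlg A [] 2 (List.ofFn fun r => (2, art (π r))) ≤ 2 := by
        intro π
        apply runAlg_le_two A _ (fun p hp => ⟨(hmem π p hp).1, (hmem π p hp).2.1⟩)
        intro r hr
        rw [List.length_ofFn, hd] at hr
        cases hr
      refine le_trans (Finset.sum_le_sum fun π _ => hb π) ?_
      rw [Finset.sum_const, Finset.card_univ, Fintype.card_perm, Fintype.card_fin,
        smul_eq_mul]
      have he : (m + 1).factorial * 2 = m.factorial * (2 * m + 2) := by
        rw [Nat.factorial_succ]; ring
      rw [he]
      exact Nat.mul_le_mul_left _ (by omega)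
    · -- deep read at position r
      have hrlt : r < m + 1 := deepIdx_lt A (m + 1) [] r hd
      set a : Fin (m + 1) := ⟨r, hrlt⟩ with ha
      have hb : ∀ π : Equiv.Perm (Fin (m + 1)),
          runAlg A [] 2 (List.ofFn fun r => (2, art (π r)))
            ≤ if π a = k then C + 1 else 2 := by
        intro π
        by_cases hπ : π a = k
        · rw [if_pos hπ]
          exact runAlg_le_CP1 A C hC _ (hmem π) []
        · rw [if_neg hπ]
          apply runAlg_le_two A _ (fun p hp => ⟨(hmem π p hp).1, (hmem π p hp).2.1⟩)
          intro r' hr'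
          rw [List.length_ofFn, hd] at hr'
          obtain rfl : r = r' := by injection hr'
          have hlt : r < (List.ofFn fun j => ((2 : ℕ), art (π j))).length := by
            rw [List.length_ofFn]; exact hrlt
          refine ⟨hlt, ?_⟩
          rw [List.get_ofFn]
          exact hA2 _ hπ
      refine le_trans (Finset.sum_le_sum fun π _ => hb π) ?_
      rw [Finset.sum_ite, Finset.sum_const, Finset.sum_const, smul_eq_mul, smul_eq_mul]
      have hcp : (Finset.univ.filter fun π : Equiv.Perm (Fin (m + 1)) => π a = k).card
          = m.factorial := by
        have := card_fiber (m + 1) (by omega) a k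
        simpa using this
      have hall : (Finset.univ.filter fun π : Equiv.Perm (Fin (m + 1)) => π a = k).card
            + (Finset.univ.filter fun π : Equiv.Perm (Fin (m + 1)) => ¬ π a = k).card
          = (m + 1).factorial := by
        rw [Finset.card_filter_add_card_filter_not, Finset.card_univ,
          Fintype.card_perm, Fintype.card_fin]
      have hfs : (m + 1).factorial = m * m.factorial + m.factorial := by
        rw [Nat.factorial_succ]; ring
      have hnp : (Finset.univ.filter fun π : Equiv.Perm (Fin (m + 1)) => ¬ π a = k).card
          = m * m.factorial := by omega
      rw [hcp, hnp]
      exact Nat.le_of_eq (by ring)
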